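/- For every monotone function f : Ω → Ω and all countable ordinals α and γ, applying the type-(Ω→Ω) iteration functional to the base-type iteration functional corresponds to ordinal exponentiation: Iter_α^{Ω→Ω}(Iter_γ^Ω)(f) = Iter_{γ^α}^Ω(f), where γ^α is ordinal exponentiation. Here Iter_α^{Ω→Ω} iterates the operator Iter_γ^Ω on the set of monotone functions Ω → Ω (ordered pointwise, with limsup at limit stages computed pointwise). -/

import Mathlib

/-!  Framework: finite type structure over Ω = countable ordinals,
     limsup/liminf, transfinite iteration functionals, hereditarily
     positive and hereditarily monotone functionals. -/

noncomputable section
namespace IterOrd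

open Ordinal

theorem omega1_pos : (0 : Ordinal) < ω₁ := Ordinal.omega0_pos.trans Ordinal.omega0_lt_omega_one

/-- `Om` is Ω, the set of countable ordinals (ordinals `< ω₁`). -/
abbrev Om : Type 1 := {o : Ordinal // o < ω₁}

/-- Infimum of a subset of Ω (the minimum for nonempty sets; `0` for `∅`). -/
def infOm (s : Set Om) : Om :=
  ⟨sInf (Subtype.val '' s), by
    rcases (Subtype.val '' s).eq_empty_or_nonempty with h | h
    · rw [h]; simpa using omega1_pos
    · obtain ⟨x, _, he⟩ := csInf_mem h
      exact he ▸ x.2⟩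

/-- Supremum of a subset of Ω.  Whenever the supremum of the set exists in Ω
(in particular for every countable subset, by regularity of `ω₁`) this is the
genuine supremum; otherwise it takes a junk value. -/
def supOm (s : Set Om) : Om :=
  if h : sSup (Subtype.val '' s) < ω₁ then ⟨sSup (Subtype.val '' s), h⟩ else ⟨0, omega1_pos⟩

/-- Finite types over the base type `o` (interpreted as Ω). -/
inductive Ty : Type
  | base : Ty
  | arrow : Ty → Ty → Ty
deriving DecidableEq

/-- The full type structure over Ω: `El base = Ω` and
`El (arrow σ τ)` is the set of all functions `El σ → El τ`. -/
@[reducible] def El : Ty → Type 1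
  | .base => Om
  | .arrow σ τ => El σ → El τ

/-- The order on each `El σ`: the ordinal order at base type, pointwise at arrow types. -/
def Le : (σ : Ty) → El σ → El σ → Prop
  | .base => fun x y => x ≤ y
  | .arrow σ τ => fun f g => ∀ x : El σ, Le τ (f x) (g x)

/-- Suprema, computed pointwise at function types. -/
def supEl : (σ : Ty) → Set (El σ) → El σ
  | .base => supOm
  | .arrow σ τ => fun S (x : El σ) => supEl τ ((fun f : El (.arrow σ τ) => f x) '' S)

/-- Infima, computed pointwise at function types. -/
def infEl : (σ : Ty) → Set (El σ) → El σ
  | .base => infOm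
  | .arrow σ τ => fun S (x : El σ) => infEl τ ((fun f : El (.arrow σ τ) => f x) '' S)

/-- `limsup_{ξ→ζ} f ξ = inf_{γ<ζ} sup_{γ≤ξ<ζ} f ξ`. -/
def limsupEl (σ : Ty) (ζ : Ordinal) (f : ∀ ξ : Ordinal, ξ < ζ → El σ) : El σ :=
  infEl σ {y | ∃ γ, ∃ _ : γ < ζ, y = supEl σ {z | ∃ ξ, ∃ h : ξ < ζ, γ ≤ ξ ∧ z = f ξ h}}

/-- `liminf_{ξ→ζ} f ξ = sup_{γ<ζ} inf_{γ≤ξ<ζ} f ξ`. -/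
def liminfEl (σ : Ty) (ζ : Ordinal) (f : ∀ ξ : Ordinal, ξ < ζ → El σ) : El σ :=
  supEl σ {y | ∃ γ, ∃ _ : γ < ζ, y = infEl σ {z | ∃ ξ, ∃ h : ξ < ζ, γ ≤ ξ ∧ z = f ξ h}}

/-- `limsup` of a ζ-indexed sequence of ordinals. -/
def oLimsup (ζ : Ordinal) (a : Ordinal → Ordinal) : Ordinal :=
  sInf {s | ∃ γ, γ < ζ ∧ s = sSup (a '' {ξ | γ ≤ ξ ∧ ξ < ζ})}

/-- `liminf` of a ζ-indexed sequence of ordinals. -/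
def oLiminf (ζ : Ordinal) (a : Ordinal → Ordinal) : Ordinal :=
  sSup {s | ∃ γ, γ < ζ ∧ s = sInf (a '' {ξ | γ ≤ ξ ∧ ξ < ζ})}

/-- The α-iteration functional of type σ:
`Iter 0 f x = x`, `Iter (α+1) f x = f (Iter α f x)`, and
`Iter μ f x = limsup_{ξ→μ} Iter ξ f x` for limit μ. -/
def Iter (σ : Ty) (α : Ordinal) : (El σ → El σ) → El σ → El σ :=
  Ordinal.limitRecOn (motive := fun _ => (El σ → El σ) → El σ → El σ) α
    (fun _ x => x)
    (fun _ ih f x => f (ih f x))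
    (fun μ _ ih f x => limsupEl σ μ (fun ξ h => ih ξ h f x))

/-- The pair (hereditarily positive, ≤hp), defined simultaneously by recursion on the type.
Every element of `Ω` and of `Ω_{ρ→τ}` with `ρ ≠ τ` is h.p., and `≤hp` there is `≤`;
`f : Ω_{τ→τ}` is h.p. iff it preserves h.p., is inflationary on h.p. arguments and is
monotone (w.r.t. `≤hp`) on h.p. arguments; `f ≤hp f'` on `Ω_{τ→τ}` iff `f x ≤hp f' x`
for every h.p. `x`. -/
def HPaux : (σ : Ty) → (El σ → Prop) × (El σ → El σ → Prop)
  | .base => ⟨fun _ => True, fun x y => x ≤ y⟩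
  | .arrow ρ τ =>
      ⟨fun f =>
        if h : ρ = τ then
          (∀ x, (HPaux ρ).1 x → (HPaux τ).1 (f x)) ∧
          (∀ x, (HPaux ρ).1 x → (HPaux τ).2 (cast (congrArg El h) x) (f x)) ∧
          (∀ x y, (HPaux ρ).1 x → (HPaux ρ).1 y → (HPaux ρ).2 x y → (HPaux τ).2 (f x) (f y))
        else True,
       fun f g =>
        if ρ = τ then ∀ x, (HPaux ρ).1 x → (HPaux τ).2 (f x) (g x)
        else Le (.arrow ρ τ) f g⟩

/-- Hereditarily positive functionals. -/
def Hp (σ : Ty) : El σ → Prop := (HPaux σ).1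

/-- The order `≤hp`. -/
def HpLe (σ : Ty) : El σ → El σ → Prop := (HPaux σ).2

/-- `f =hp g` iff `f ≤hp g` and `g ≤hp f`. -/
def HpEq (σ : Ty) (f g : El σ) : Prop := HpLe σ f g ∧ HpLe σ g f

/-- The pair (hereditarily monotone, ≤ on the hereditarily monotone structure),
by recursion on the type.  `f` is hereditarily monotone iff it maps hereditarily
monotone arguments to hereditarily monotone values, monotonically; the order is
pointwise over hereditarily monotone arguments (i.e. the order of `Ω^mon`). -/
def HMaux : (σ : Ty) → (El σ → Prop) × (El σ → El σ → Prop)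
  | .base => ⟨fun _ => True, fun x y => x ≤ y⟩
  | .arrow σ τ =>
      ⟨fun f =>
        (∀ x, (HMaux σ).1 x → (HMaux τ).1 (f x)) ∧
        (∀ x y, (HMaux σ).1 x → (HMaux σ).1 y → (HMaux σ).2 x y → (HMaux τ).2 (f x) (f y)),
       fun f g => ∀ x, (HMaux σ).1 x → (HMaux τ).2 (f x) (g x)⟩

/-- Hereditarily monotone functionals: the members of the type structure `Ω^mon`. -/
def HM (σ : Ty) : El σ → Prop := (HMaux σ).1

/-- The (pointwise) order of the hereditarily monotone type structure `Ω^mon`. -/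
def LeHM (σ : Ty) : El σ → El σ → Prop := (HMaux σ).2

/-- Equality in the hereditarily monotone type structure `Ω^mon`. -/
def EqHM (σ : Ty) (f g : El σ) : Prop := LeHM σ f g ∧ LeHM σ g f


/-! ### Auxiliary lemmas for Statement 2 -/

section Aux

universe u

open Ordinal

private lemma card_lt_aleph1 {o : Ordinal} (h : o < ω₁) : o.card < Cardinal.aleph 1 := by
  rw [← Cardinal.lt_ord, Cardinal.ord_aleph]; exact h

private lemma add_lt_omega1 {a b : Ordinal} (ha : a < ω₁) (hb : b < ω₁) : a + b < ω₁ := by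
  rw [← Cardinal.ord_aleph, Cardinal.lt_ord, Ordinal.card_add]
  exact Cardinal.add_lt_of_lt (Cardinal.aleph0_le_aleph 1) (card_lt_aleph1 ha)
    (card_lt_aleph1 hb)

private lemma mul_lt_omega1 {a b : Ordinal} (ha : a < ω₁) (hb : b < ω₁) : a * b < ω₁ := by
  rw [← Cardinal.ord_aleph, Cardinal.lt_ord, Ordinal.card_mul]
  exact Cardinal.mul_lt_of_lt (Cardinal.aleph0_le_aleph 1) (card_lt_aleph1 ha)
    (card_lt_aleph1 hb)

private lemma opow_lt_omega1 {a : Ordinal} (ha : a < ω₁) :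
    ∀ {b : Ordinal}, b < ω₁ → a ^ b < ω₁ := by
  intro b
  induction b using Ordinal.induction with
  | _ b IH =>
  intro hb
  rcases Ordinal.zero_or_succ_or_isSuccLimit b with rfl | ⟨c, rfl⟩ | hl
  · rw [Ordinal.opow_zero]
    exact Ordinal.one_lt_omega0.trans Ordinal.omega0_lt_omega_one
  · rw [Ordinal.opow_succ]
    exact mul_lt_omega1 (IH c (Order.lt_succ c) ((Order.lt_succ c).trans hb)) ha
  · rcases eq_or_ne a 0 with rfl | h0
    · rw [Ordinal.zero_opow hl.pos.ne']; exact omega1_pos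
    · rw [Ordinal.opow_limit h0 hl]
      have h1 : b.card ≤ Cardinal.aleph0 := by
        rw [← Order.lt_succ_iff, Cardinal.succ_aleph0]
        exact card_lt_aleph1 hb
      have hcnt : Countable (Set.Iio b) := by
        rw [← Cardinal.mk_le_aleph0_iff, Cardinal.mk_Iio_ordinal]
        simpa using Cardinal.lift_le.2 h1
      exact Ordinal.iSup_lt_omega_one (fun i => IH i i.2 (i.2.trans hb))

/-- Boundedness predicate for subsets of `Om`. -/
private abbrev Bdd (s : Set Om) : Prop := sSup (Subtype.val '' s) < ω₁

private lemma bddAbove_val (s : Set Om) : BddAbove (Subtype.val '' s) := by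
  refine ⟨ω₁, ?_⟩
  rintro z ⟨w, _, rfl⟩
  exact w.2.le

private lemma le_supOm {s : Set Om} (hs : Bdd s) {a : Om} (ha : a ∈ s) : a ≤ supOm s := by
  rw [supOm, dif_pos hs]
  exact le_csSup (bddAbove_val s) ⟨a, ha, rfl⟩

private lemma supOm_le {s : Set Om} {b : Om} (h : ∀ a ∈ s, a ≤ b) : supOm s ≤ b := by
  rw [supOm]
  split
  · show sSup (Subtype.val '' s) ≤ b.1
    apply csSup_le'
    rintro z ⟨w, hw, rfl⟩
    exact h w hw
  · show (0 : Ordinal) ≤ b.1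
    exact zero_le

private lemma supOm_singleton (y : Om) : supOm {y} = y := by
  have hb : Bdd {y} := by
    rw [Bdd, Set.image_singleton, csSup_singleton]; exact y.2
  apply le_antisymm
  · exact supOm_le (by rintro a rfl; exact le_rfl)
  · exact le_supOm hb rfl

private lemma infOm_le {s : Set Om} {a : Om} (ha : a ∈ s) : infOm s ≤ a := by
  show sInf (Subtype.val '' s) ≤ a.1
  exact csInf_le (OrderBot.bddBelow _) ⟨a, ha, rfl⟩

private lemma le_infOm {s : Set Om} (hne : s.Nonempty) {b : Om} (h : ∀ a ∈ s, b ≤ a) :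
    b ≤ infOm s := by
  show b.1 ≤ sInf (Subtype.val '' s)
  exact le_csInf (hne.image _) (by rintro z ⟨w, hw, rfl⟩; exact h w hw)

private lemma supOm_le_supOm {s t : Set Om} (ht : Bdd t) (h : ∀ a ∈ s, ∃ b ∈ t, a ≤ b) :
    supOm s ≤ supOm t := by
  apply supOm_le
  intro a ha
  obtain ⟨b, hb, hab⟩ := h a ha
  exact hab.trans (le_supOm ht hb)

/-- The tail set of a sequence. -/
private def tailSet (lam γ : Ordinal) (A : Ordinal → Om) : Set Om :=
  {z | ∃ ξ, ∃ _ : ξ < lam, γ ≤ ξ ∧ z = A ξ}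

/-- limsup of a total sequence. -/
private def limsupSeq (lam : Ordinal) (A : Ordinal → Om) : Om :=
  limsupEl .base lam (fun ξ _ => A ξ)

private lemma limsupSeq_def (lam : Ordinal) (A : Ordinal → Om) :
    limsupSeq lam A = infOm {y | ∃ γ, ∃ _ : γ < lam, y = supOm (tailSet lam γ A)} := rfl

private lemma sSup_lt_omega1 {lam : Ordinal} (hlam : lam < ω₁) (g : Ordinal → Om)
    {s : Set Ordinal.{0}} (hs : ∀ z ∈ s, ∃ ξ, ξ < lam ∧ z = (g ξ).1) : sSup s < ω₁ := by
  rcases Set.eq_empty_or_nonempty s with rfl | hne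
  · rw [csSup_empty]; exact omega1_pos
  · have h1 : lam.card ≤ Cardinal.aleph0 := by
      rw [← Order.lt_succ_iff, Cardinal.succ_aleph0]
      exact card_lt_aleph1 hlam
    have hcnt : Countable (Set.Iio lam) := by
      rw [← Cardinal.mk_le_aleph0_iff, Ordinal.mk_Iio_ordinal]
      simpa using Cardinal.lift_le.2 h1
    have hsub : s ⊆ Set.range (fun ξ : Set.Iio lam => (g ξ.1).1) := by
      intro z hz
      obtain ⟨ξ, hξ, rfl⟩ := hs z hz
      exact ⟨⟨ξ, hξ⟩, rfl⟩
    have hcnt2 : s.Countable := (Set.countable_range _).mono hsub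
    obtain ⟨F, hF⟩ := hcnt2.exists_eq_range hne
    have hFlt : ∀ n, F n < ω₁ := by
      intro n
      have hmem : F n ∈ s := by rw [hF]; exact Set.mem_range_self n
      obtain ⟨ξ, _, h⟩ := hs _ hmem
      rw [h]; exact (g ξ).2
    rw [hF]
    show iSup F < ω₁
    rw [← Cardinal.ord_aleph]
    exact Cardinal.iSup_lt_ord_of_isRegular Cardinal.isRegular_aleph_one
      (by simpa using Cardinal.aleph0_lt_aleph_one)
      (fun n => by rw [Cardinal.ord_aleph]; exact hFlt n)

private lemma bdd_tailSet {lam : Ordinal} (hlam : lam < ω₁) (γ : Ordinal) (A : Ordinal → Om) :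
    Bdd (tailSet lam γ A) := by
  apply sSup_lt_omega1 hlam A
  rintro z ⟨w, ⟨ξ, hξ, _, rfl⟩, rfl⟩
  exact ⟨ξ, hξ, rfl⟩

private lemma limsupSeq_const {lam : Ordinal} (hlam : Order.IsSuccLimit lam) (hlam1 : lam < ω₁)
    {A : Ordinal → Om} {n : Ordinal} (hn : n < lam) {y : Om}
    (hy : ∀ ξ, n ≤ ξ → ξ < lam → A ξ = y) : limsupSeq lam A = y := by
  rw [limsupSeq_def]
  apply le_antisymm
  · have h1 : tailSet lam n A = {y} := by
      ext z
      constructor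
      · rintro ⟨ξ, hξ, hnξ, rfl⟩
        exact hy ξ hnξ hξ
      · rintro rfl
        exact ⟨n, hn, le_rfl, (hy n le_rfl hn).symm⟩
    have h2 : supOm (tailSet lam n A) = y := by rw [h1, supOm_singleton]
    have hmem : supOm (tailSet lam n A)
        ∈ {y | ∃ γ, ∃ _ : γ < lam, y = supOm (tailSet lam γ A)} := ⟨n, hn, rfl⟩
    exact le_trans (infOm_le hmem) h2.le
  · refine le_infOm ?_ ?_
    · exact ⟨_, 0, hlam.pos, rfl⟩
    rintro a ⟨γ, hγ, rfl⟩
    have hξ : max γ n < lam := max_lt hγ hn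
    have h2 : y = A (max γ n) := (hy _ (le_max_right _ _) hξ).symm
    rw [h2]
    exact le_supOm (bdd_tailSet hlam1 _ _) ⟨max γ n, hξ, le_max_left _ _, rfl⟩

private lemma limsupSeq_mono {lam : Ordinal} (hlam : Order.IsSuccLimit lam) (hlam1 : lam < ω₁)
    {A : Ordinal → Om} (hA : ∀ ξ ξ', ξ ≤ ξ' → ξ' < lam → A ξ ≤ A ξ') :
    limsupSeq lam A = supOm (tailSet lam 0 A) := by
  rw [limsupSeq_def]
  apply le_antisymm
  · exact infOm_le ⟨0, hlam.pos, rfl⟩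
  · refine le_infOm ?_ ?_
    · exact ⟨_, 0, hlam.pos, rfl⟩
    rintro a ⟨γ, hγ, rfl⟩
    apply supOm_le_supOm (bdd_tailSet hlam1 _ _)
    rintro b ⟨ξ, hξ, _, rfl⟩
    exact ⟨A (max ξ γ), ⟨max ξ γ, max_lt hξ hγ, le_max_right _ _, rfl⟩,
      hA ξ _ (le_max_left _ _) (max_lt hξ hγ)⟩

private lemma tailSet_congr {lam : Ordinal} {A B : Ordinal → Om}
    (h : ∀ ξ, ξ < lam → A ξ = B ξ) (γ : Ordinal) :
    tailSet lam γ A = tailSet lam γ B := by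
  ext z
  constructor
  · rintro ⟨ξ, h1, h2, rfl⟩; exact ⟨ξ, h1, h2, h ξ h1⟩
  · rintro ⟨ξ, h1, h2, rfl⟩; exact ⟨ξ, h1, h2, (h ξ h1).symm⟩

private lemma limsupSeq_congr {lam : Ordinal} {A B : Ordinal → Om}
    (h : ∀ ξ, ξ < lam → A ξ = B ξ) : limsupSeq lam A = limsupSeq lam B := by
  rw [limsupSeq_def, limsupSeq_def]
  congr 1
  ext y
  constructor
  · rintro ⟨γ, hγ, rfl⟩; exact ⟨γ, hγ, by rw [tailSet_congr h]⟩
  · rintro ⟨γ, hγ, rfl⟩; exact ⟨γ, hγ, by rw [tailSet_congr h]⟩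

/-! Basic unfolding lemmas for `Iter`. -/

private lemma iter_zero (σ : Ty) (F : El σ → El σ) (x : El σ) : Iter σ 0 F x = x := by
  unfold Iter
  rw [Ordinal.limitRecOn_zero]

private lemma iter_succ (σ : Ty) (α : Ordinal) (F : El σ → El σ) (x : El σ) :
    Iter σ (α + 1) F x = F (Iter σ α F x) := by
  unfold Iter
  rw [Ordinal.add_one_eq_succ, Ordinal.limitRecOn_succ]

private lemma iter_limit (σ : Ty) {μ : Ordinal} (hμ : Order.IsSuccLimit μ) (F : El σ → El σ)
    (x : El σ) : Iter σ μ F x = limsupEl σ μ (fun ξ _ => Iter σ ξ F x) := by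
  unfold Iter
  rw [Ordinal.limitRecOn_limit _ _ _ _ hμ]

private lemma iter_limit_base {lam : Ordinal} (hlam : Order.IsSuccLimit lam) (f : Om → Om) (x : Om) :
    Iter .base lam f x = limsupSeq lam (fun ξ => Iter .base ξ f x) :=
  iter_limit .base hlam f x

/-! Orbit dichotomy. -/

private lemma iter_incr {f : Om → Om} (hf : Monotone f) {x : Om} (hx : x ≤ f x) :
    ∀ β, β < ω₁ → (∀ δ, δ ≤ β → Iter .base δ f x ≤ Iter .base β f x)
      ∧ Iter .base β f x ≤ f (Iter .base β f x) := by
  intro β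
  induction β using Ordinal.induction with
  | _ β IH =>
  intro hβ
  rcases Ordinal.zero_or_succ_or_isSuccLimit β with rfl | ⟨β', rfl⟩ | hl
  · refine ⟨fun δ hδ => ?_, ?_⟩
    · rw [nonpos_iff_eq_zero.mp hδ]
    · rw [iter_zero]; exact hx
  · have h1 : β' < Order.succ β' := Order.lt_succ β'
    obtain ⟨IH1, IH2⟩ := IH β' h1 (h1.trans hβ)
    have hsucc : Iter .base (Order.succ β') f x = f (Iter .base β' f x) := by
      rw [← Ordinal.add_one_eq_succ, iter_succ]
    refine ⟨fun δ hδ => ?_, ?_⟩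
    · rcases eq_or_lt_of_le hδ with rfl | hlt
      · exact le_rfl
      · rw [hsucc]
        exact (IH1 δ (Order.lt_succ_iff.mp hlt)).trans IH2
    · rw [hsucc]
      exact hf IH2
  · have hmono : ∀ ξ ξ', ξ ≤ ξ' → ξ' < β →
        Iter .base ξ f x ≤ Iter .base ξ' f x :=
      fun ξ ξ' h h' => (IH ξ' h' (h'.trans hβ)).1 ξ h
    have heq : Iter .base β f x = supOm (tailSet β 0 (fun ξ => Iter .base ξ f x)) := by
      rw [iter_limit_base hl, limsupSeq_mono hl hβ hmono]
    refine ⟨fun δ hδ => ?_, ?_⟩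
    · rcases eq_or_lt_of_le hδ with rfl | hlt
      · exact le_rfl
      · rw [heq]
        exact le_supOm (bdd_tailSet hβ _ _) ⟨δ, hlt, (zero_le : 0 ≤ δ), rfl⟩
    · conv_lhs => rw [heq]
      apply supOm_le
      rintro a ⟨ξ, hξ, _, rfl⟩
      refine ((IH ξ hξ (hξ.trans hβ)).2).trans (hf ?_)
      rw [heq]
      exact le_supOm (bdd_tailSet hβ _ _) ⟨ξ, hξ, (zero_le : 0 ≤ ξ), rfl⟩

private lemma iter_nat_succ (f : Om → Om) (x : Om) (n : ℕ) :
    Iter .base ((n + 1 : ℕ) : Ordinal.{u}) f x = f (Iter .base ((n : ℕ) : Ordinal.{u}) f x) := by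
  rw [show ((n + 1 : ℕ) : Ordinal) = (n : Ordinal) + 1 by push_cast; rfl]
  rw [iter_succ]

private lemma exists_fix {f : Om → Om} (hf : Monotone f) {x : Om} (hx : f x < x) :
    ∃ n : ℕ, f (Iter .base ((n : ℕ) : Ordinal.{u}) f x) = Iter .base ((n : ℕ) : Ordinal.{u}) f x := by
  by_contra hcon
  push_neg at hcon
  have hdec : ∀ n : ℕ, Iter .base ((n + 1 : ℕ) : Ordinal.{u}) f x
      < Iter .base ((n : ℕ) : Ordinal.{u}) f x := by
    intro n
    induction n with
    | zero =>
      rw [iter_nat_succ]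
      have h0 : Iter .base ((0 : ℕ) : Ordinal) f x = x := by rw [Nat.cast_zero, iter_zero]
      rw [h0]
      exact hx
    | succ m ihm =>
      rw [iter_nat_succ]
      refine lt_of_le_of_ne ?_ (hcon (m + 1))
      exact (hf ihm.le).trans_eq (iter_nat_succ f x m).symm
  obtain ⟨z, ⟨n, rfl⟩, hmin⟩ := Ordinal.lt_wf.has_min
    (Set.range fun n : ℕ => (Iter .base ((n : ℕ) : Ordinal.{u}) f x).1) ⟨_, ⟨0, rfl⟩⟩
  have hdec' : ∀ m : ℕ, (Iter .base ((m + 1 : ℕ) : Ordinal.{u}) f x).1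
      < (Iter .base ((m : ℕ) : Ordinal.{u}) f x).1 :=
    fun m => Subtype.coe_lt_coe.2 (hdec m)
  exact hmin _ ⟨n + 1, rfl⟩ (hdec' n)

private lemma iter_const_from {f : Om → Om} {x : Om} {n : Ordinal}
    (hfix : f (Iter .base n f x) = Iter .base n f x) :
    ∀ β, n ≤ β → β < ω₁ → Iter .base β f x = Iter .base n f x := by
  intro β
  induction β using Ordinal.induction with
  | _ β IH =>
  intro hnβ hβ
  rcases eq_or_lt_of_le hnβ with rfl | hlt
  · rfl
  rcases Ordinal.zero_or_succ_or_isSuccLimit β with rfl | ⟨β', rfl⟩ | hl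
  · exact (not_lt_zero hlt).elim
  · have h1 : β' < Order.succ β' := Order.lt_succ β'
    rw [← Ordinal.add_one_eq_succ, iter_succ,
      IH β' h1 (Order.lt_succ_iff.mp hlt) (h1.trans hβ), hfix]
  · rw [iter_limit_base hl]
    exact limsupSeq_const hl hβ hlt (fun ξ h1 h2 => IH ξ h2 h1 (h2.trans hβ))

/-! limsup over a monotone cofinal subsequence. -/

private lemma limsup_subseq {f : Om → Om} (hf : Monotone f) (x : Om) {mu lam : Ordinal}
    (hmu : Order.IsSuccLimit mu) (hmu1 : mu < ω₁) (hlam : Order.IsSuccLimit lam) (hlam1 : lam < ω₁)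
    {g : Ordinal → Ordinal}
    (hg1 : ∀ ξ, ξ < mu → g ξ < lam)
    (hg2 : ∀ ρ, ρ < lam → ∃ ξ, ξ < mu ∧ ρ ≤ g ξ)
    (hgm : ∀ ξ ξ', ξ ≤ ξ' → g ξ ≤ g ξ')
    (hg3 : ∀ ξ, ξ ≤ g ξ) :
    limsupSeq mu (fun ξ => Iter .base (g ξ) f x) = Iter .base lam f x := by
  rcases le_or_gt x (f x) with hx | hx
  · have key := fun β hβ => iter_incr hf hx β hβ
    rw [iter_limit_base hlam,
      limsupSeq_mono hlam hlam1 (fun ξ ξ' h h' => (key ξ' (h'.trans hlam1)).1 ξ h),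
      limsupSeq_mono hmu hmu1
        (fun ξ ξ' h _ => (key (g ξ') ((hg1 ξ' (by assumption)).trans hlam1)).1 (g ξ) (hgm ξ ξ' h))]
    apply le_antisymm
    · apply supOm_le_supOm (bdd_tailSet hlam1 _ _)
      rintro a ⟨ξ, hξ, _, rfl⟩
      exact ⟨_, ⟨g ξ, hg1 ξ hξ, zero_le, rfl⟩, le_rfl⟩
    · apply supOm_le_supOm (bdd_tailSet hmu1 _ _)
      rintro a ⟨ρ, hρ, _, rfl⟩
      obtain ⟨ξ, hξ, hρξ⟩ := hg2 ρ hρ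
      exact ⟨_, ⟨ξ, hξ, zero_le, rfl⟩,
        (key (g ξ) ((hg1 ξ hξ).trans hlam1)).1 ρ hρξ⟩
  · obtain ⟨n, hfix⟩ := exists_fix hf hx
    have hnmu : (n : Ordinal) < mu :=
      (Ordinal.nat_lt_omega0 n).trans_le (Ordinal.omega0_le_of_isSuccLimit hmu)
    have hnlam : (n : Ordinal) ≤ lam :=
      ((Ordinal.nat_lt_omega0 n).trans_le (Ordinal.omega0_le_of_isSuccLimit hlam)).le
    rw [iter_const_from hfix lam hnlam hlam1]
    apply limsupSeq_const hmu hmu1 hnmu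
    intro ξ h1 h2
    exact iter_const_from hfix (g ξ) (h1.trans (hg3 ξ)) ((hg1 ξ h2).trans hlam1)

/-! Shift invariance of limsup, and the addition/multiplication laws. -/

private lemma limsupSeq_shift {δ η : Ordinal} (hη : Order.IsSuccLimit η) (hδη : δ + η < ω₁)
    (A : Ordinal → Om) :
    limsupSeq (δ + η) A = limsupSeq η (fun ξ => A (δ + ξ)) := by
  have hkey : ∀ β, tailSet (δ + η) (δ + β) A = tailSet η β (fun ξ => A (δ + ξ)) := by
    intro β
    ext z
    constructor
    · rintro ⟨ρ, h1, h2, rfl⟩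
      have hδρ : δ ≤ ρ := (le_add_right (le_refl δ) : δ ≤ δ + β).trans h2
      refine ⟨ρ - δ, ?_, ?_, ?_⟩
      · rwa [← add_lt_add_iff_left δ, Ordinal.add_sub_cancel_of_le hδρ]
      · rwa [← add_le_add_iff_left δ, Ordinal.add_sub_cancel_of_le hδρ]
      · show A ρ = A (δ + (ρ - δ))
        rw [Ordinal.add_sub_cancel_of_le hδρ]
    · rintro ⟨ξ, h1, h2, rfl⟩
      exact ⟨δ + ξ, (add_lt_add_iff_left δ).2 h1, (add_le_add_iff_left δ).2 h2, rfl⟩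
  rw [limsupSeq_def, limsupSeq_def]
  apply le_antisymm
  · refine le_infOm ?_ ?_
    · exact ⟨_, 0, hη.pos, rfl⟩
    rintro a ⟨β, hβ, rfl⟩
    have h2 : supOm (tailSet (δ + η) (δ + β) A) = supOm (tailSet η β fun ξ => A (δ + ξ)) := by
      rw [hkey]
    have hmem : supOm (tailSet (δ + η) (δ + β) A)
        ∈ {y | ∃ γ, ∃ _ : γ < δ + η, y = supOm (tailSet (δ + η) γ A)} :=
      ⟨δ + β, (add_lt_add_iff_left δ).2 hβ, rfl⟩
    exact le_trans (infOm_le hmem) h2.le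
  · refine le_infOm ?_ ?_
    · exact ⟨_, 0, (Ordinal.isSuccLimit_add δ hη).pos, rfl⟩
    rintro a ⟨γ, hγ, rfl⟩
    rcases le_or_gt δ γ with hδγ | hγδ
    · have h1 : δ + (γ - δ) = γ := Ordinal.add_sub_cancel_of_le hδγ
      have h2 : γ - δ < η := by
        have := hγ
        rwa [← h1, add_lt_add_iff_left δ] at this
      have h3 : supOm (tailSet η (γ - δ) fun ξ => A (δ + ξ)) = supOm (tailSet (δ + η) γ A) := by
        rw [← hkey, h1]
      have hmem : supOm (tailSet η (γ - δ) fun ξ => A (δ + ξ))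
          ∈ {y | ∃ β, ∃ _ : β < η, y = supOm (tailSet η β fun ξ => A (δ + ξ))} :=
        ⟨γ - δ, h2, rfl⟩
      exact le_trans (infOm_le hmem) h3.le
    · have h3 : supOm (tailSet η 0 fun ξ => A (δ + ξ)) = supOm (tailSet (δ + η) δ A) := by
        rw [← hkey (0 : Ordinal), add_zero]
      have h4 : supOm (tailSet (δ + η) δ A) ≤ supOm (tailSet (δ + η) γ A) :=
        supOm_le_supOm (bdd_tailSet hδη _ _)
          (by rintro a ⟨ρ, h1, h2, rfl⟩; exact ⟨_, ⟨ρ, h1, hγδ.le.trans h2, rfl⟩, le_rfl⟩)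
      have hmem : supOm (tailSet η 0 fun ξ => A (δ + ξ))
          ∈ {y | ∃ β, ∃ _ : β < η, y = supOm (tailSet η β fun ξ => A (δ + ξ))} :=
        ⟨0, hη.pos, rfl⟩
      exact le_trans (infOm_le hmem) (h3.le.trans h4)

private lemma iter_add (f : Om → Om) :
    ∀ η, η < ω₁ → ∀ δ, δ < ω₁ → ∀ x : Om,
      Iter .base (δ + η) f x = Iter .base η f (Iter .base δ f x) := by
  intro η
  induction η using Ordinal.induction with
  | _ η IH =>
  intro hη δ hδ x
  rcases Ordinal.zero_or_succ_or_isSuccLimit η with rfl | ⟨η', rfl⟩ | hl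
  · rw [add_zero, iter_zero]
  · have h1 : η' < Order.succ η' := Order.lt_succ η'
    rw [← Ordinal.add_one_eq_succ, ← add_assoc, iter_succ, iter_succ,
      IH η' h1 (h1.trans hη) δ hδ x]
  · have hδη : Order.IsSuccLimit (δ + η) := Ordinal.isSuccLimit_add δ hl
    rw [iter_limit_base hδη, iter_limit_base hl, limsupSeq_shift hl (add_lt_omega1 hδ hη)]
    exact limsupSeq_congr (fun ξ hξ => IH ξ hξ (hξ.trans hη) δ hδ x)

private lemma iter_mul {f : Om → Om} (hf : Monotone f) :
    ∀ c, c < ω₁ → ∀ δ, δ < ω₁ → ∀ x : Om,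
      Iter .base c (Iter .base δ f) x = Iter .base (δ * c) f x := by
  intro c
  induction c using Ordinal.induction with
  | _ c IH =>
  intro hc δ hδ x
  rcases Ordinal.zero_or_succ_or_isSuccLimit c with rfl | ⟨c', rfl⟩ | hl
  · rw [mul_zero, iter_zero, iter_zero]
  · have h1 : c' < Order.succ c' := Order.lt_succ c'
    rw [← Ordinal.add_one_eq_succ, iter_succ, IH c' h1 (h1.trans hc) δ hδ x,
      mul_add_one,
      iter_add f δ hδ (δ * c') (mul_lt_omega1 hδ (h1.trans hc)) x]
  · have hIH : ∀ ξ, ξ < c → Iter .base ξ (Iter .base δ f) x = Iter .base (δ * ξ) f x :=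
      fun ξ hξ => IH ξ hξ (hξ.trans hc) δ hδ x
    rw [iter_limit_base hl,
      limsupSeq_congr (B := fun ξ => Iter .base (δ * ξ) f x) hIH]
    rcases eq_or_ne δ 0 with rfl | hδ0
    · simp only [zero_mul, iter_zero]
      exact limsupSeq_const hl hc hl.pos (fun ξ _ _ => rfl)
    · have hδpos : 0 < δ := pos_iff_ne_zero.2 hδ0
      refine limsup_subseq hf x hl hc (Ordinal.isSuccLimit_mul hδpos hl)
        (mul_lt_omega1 hδ hc) ?_ ?_ ?_ ?_
      · exact fun ξ hξ => (mul_lt_mul_iff_of_pos_left hδpos).2 hξ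
      · intro ρ hρ
        obtain ⟨ξ, hξ, h⟩ := (Ordinal.lt_mul_iff_of_isSuccLimit hl).1 hρ
        exact ⟨ξ, hξ, h.le⟩
      · exact fun ξ ξ' h => mul_le_mul_right h δ
      · exact fun ξ => Ordinal.le_mul_right ξ hδpos

private lemma limsupEl_arrow_apply (μ : Ordinal) (F : Ordinal → Om → Om) (x : Om) :
    limsupEl (.arrow .base .base) μ (fun ξ _ => F ξ) x = limsupSeq μ (fun ξ => F ξ x) := by
  rw [limsupSeq_def]
  show infOm _ = infOm _
  congr 1
  ext y
  constructor
  · rintro ⟨G, ⟨γ, hγ, rfl⟩, rfl⟩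
    refine ⟨γ, hγ, ?_⟩
    show supOm _ = supOm _
    congr 1
    ext z
    constructor
    · rintro ⟨G', ⟨ξ, h1, h2, rfl⟩, rfl⟩
      exact ⟨ξ, h1, h2, rfl⟩
    · rintro ⟨ξ, h1, h2, rfl⟩
      exact ⟨F ξ, ⟨ξ, h1, h2, rfl⟩, rfl⟩
  · rintro ⟨γ, hγ, rfl⟩
    refine ⟨supEl (.arrow .base .base)
      {z | ∃ ξ, ∃ _ : ξ < μ, γ ≤ ξ ∧ z = F ξ}, ⟨γ, hγ, rfl⟩, ?_⟩
    show supOm _ = supOm _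
    congr 1
    ext z
    constructor
    · rintro ⟨G', ⟨ξ, h1, h2, rfl⟩, rfl⟩
      exact ⟨ξ, h1, h2, rfl⟩
    · rintro ⟨ξ, h1, h2, rfl⟩
      exact ⟨F ξ, ⟨ξ, h1, h2, rfl⟩, rfl⟩

end Aux

/-- For every monotone `f : Ω → Ω` and all countable ordinals `α`, `γ`,
`Iter_α^{Ω→Ω} (Iter_γ^Ω) f = Iter_{γ^α}^Ω f`. -/
theorem iter_iterFun_eq_iter_opow (f : Om → Om) (hf : Monotone f)
    (α γ : Ordinal) (hα : α < ω₁) (hγ : γ < ω₁) :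
    Iter (.arrow .base .base) α (Iter .base γ) f = Iter .base (γ ^ α) f := by
  induction α using Ordinal.induction with
  | _ α IH =>
  rcases Ordinal.zero_or_succ_or_isSuccLimit α with rfl | ⟨β, rfl⟩ | hl
  · rw [iter_zero, Ordinal.opow_zero]
    funext x
    rw [show (1 : Ordinal) = 0 + 1 from (zero_add 1).symm, iter_succ, iter_zero]
  · have h1 : β < Order.succ β := Order.lt_succ β
    have hβ : β < ω₁ := h1.trans hα
    rw [← Ordinal.add_one_eq_succ, iter_succ, IH β h1 hβ]
    funext x
    rw [iter_mul hf γ hγ (γ ^ β) (opow_lt_omega1 hγ hβ) x,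
      Ordinal.add_one_eq_succ, Ordinal.opow_succ]
  · funext x
    rw [iter_limit (.arrow .base .base) hl (Iter .base γ) f,
      limsupEl_arrow_apply α (fun ξ => Iter (.arrow .base .base) ξ (Iter .base γ) f) x,
      limsupSeq_congr (B := fun ξ => Iter .base (γ ^ ξ) f x)
        (fun ξ hξ => congrFun (IH ξ hξ (hξ.trans hα)) x)]
    rcases eq_or_ne γ 0 with rfl | hγ0
    · rw [Ordinal.zero_opow hl.pos.ne', iter_zero]
      apply limsupSeq_const hl hα
        (show (1 : Ordinal) < α from
          Ordinal.one_lt_omega0.trans_le (Ordinal.omega0_le_of_isSuccLimit hl))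
      intro ξ h1 h2
      rw [Ordinal.zero_opow (Ordinal.one_le_iff_ne_zero.mp h1), iter_zero]
    rcases eq_or_ne γ 1 with rfl | hγ1
    · rw [Ordinal.one_opow]
      apply limsupSeq_const hl hα hl.pos
      intro ξ _ _
      rw [Ordinal.one_opow]
    · have h2 : 1 < γ := lt_of_le_of_ne (Ordinal.one_le_iff_ne_zero.2 hγ0) (Ne.symm hγ1)
      refine limsup_subseq hf x hl hα (Ordinal.isSuccLimit_opow h2 hl)
        (opow_lt_omega1 hγ hα) ?_ ?_ ?_ ?_
      · exact fun ξ hξ => (Ordinal.opow_lt_opow_iff_right h2).2 hξ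
      · intro ρ hρ
        obtain ⟨ξ, hξ, h⟩ := (Ordinal.lt_opow_of_isSuccLimit hγ0 hl).1 hρ
        exact ⟨ξ, hξ, h.le⟩
      · exact fun ξ ξ' h => Ordinal.opow_le_opow_right (zero_lt_one.trans h2) h
      · exact fun ξ => Ordinal.right_le_opow ξ h2

end IterOrd
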